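/- Let Ω ⊂ ℝ^d be a bounded domain with Lebesgue measure, let F satisfy (A1)–(A3), let u : Ω → [0,∞) be integrable with F(u) ∈ L¹(Ω), and let 0 < τ with ατ < 2. If v̂ is a minimizer of the Fisher–Rao JKO functional G(v) = ∫_Ω F(v) dx + (2/τ) ∫_Ω (√v − √u)² dx over nonnegative measurable v with F(v) ∈ L¹(Ω), then the sets {u > 0} and {v̂ > 0} coincide up to Lebesgue-null sets; that is, v̂ = 0 a.e. on {u = 0} and u = 0 a.e. on {v̂ = 0}. -/

import Mathlib

open Real Set MeasureTheory

section Aux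

variable {F : ℝ → ℝ} {α β r : ℝ}

lemma derivF_strictMono (hF2 : ContDiffOn ℝ 2 F (Set.Ioi 0))
    (hF'' : ∀ s : ℝ, 0 < s → 0 < deriv (deriv F) s) :
    StrictMonoOn (deriv F) (Set.Ioi 0) := by
  apply strictMonoOn_of_deriv_pos (convex_Ioi 0)
  · exact hF2.continuousOn_deriv_of_isOpen isOpen_Ioi one_le_two
  · intro x hx
    rw [interior_Ioi] at hx
    exact hF'' x hx

lemma derivF_hasDerivAt (hF2 : ContDiffOn ℝ 2 F (Set.Ioi 0)) {x : ℝ} (hx : 0 < x) :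
    HasDerivAt F (deriv F x) x :=
  ((hF2.differentiableOn (by norm_num)).differentiableAt (isOpen_Ioi.mem_nhds hx)).hasDerivAt

/-- MVT on `[a,b] ⊆ [0,∞)`. -/
lemma F_slope (hF1 : ContDiffOn ℝ 1 F (Set.Ici 0)) (hF2 : ContDiffOn ℝ 2 F (Set.Ioi 0))
    {a b : ℝ} (ha : 0 ≤ a) (hab : a < b) :
    ∃ c ∈ Ioo a b, F b - F a = deriv F c * (b - a) := by
  obtain ⟨c, hc, hco⟩ := exists_hasDerivAt_eq_slope F (deriv F) hab
    (hF1.continuousOn.mono (fun x hx => ha.trans hx.1))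
    (fun x hx => derivF_hasDerivAt hF2 (lt_of_le_of_lt ha hx.1))
  have hba : b - a ≠ 0 := sub_ne_zero.2 hab.ne'
  refine ⟨c, hc, ?_⟩
  rw [hco]
  field_simp

end Aux

section Aux2

variable {F : ℝ → ℝ} {α β r : ℝ}

lemma F_upper (hF1 : ContDiffOn ℝ 1 F (Set.Ici 0)) (hF2 : ContDiffOn ℝ 2 F (Set.Ioi 0))
    (hF'' : ∀ s : ℝ, 0 < s → 0 < deriv (deriv F) s) :
    ∀ s : ℝ, 0 < s → F s - F 0 ≤ deriv F s * s := by
  intro s hs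
  obtain ⟨c, hc, e⟩ := F_slope hF1 hF2 le_rfl hs
  have m : deriv F c ≤ deriv F s :=
    ((derivF_strictMono hF2 hF'').monotoneOn) (mem_Ioi.2 hc.1) (mem_Ioi.2 hs) hc.2.le
  have : deriv F c * s ≤ deriv F s * s := mul_le_mul_of_nonneg_right m hs.le
  simpa [e] using by linarith [e, this]

lemma F_lower (hα : 0 ≤ α) (hβ : 0 < β) (hr : 1 < r)
    (hF1 : ContDiffOn ℝ 1 F (Set.Ici 0)) (hF2 : ContDiffOn ℝ 2 F (Set.Ioi 0))
    (hF'' : ∀ s : ℝ, 0 < s → 0 < deriv (deriv F) s)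
    (hFlow : ∀ s : ℝ, 0 < s → β * s ^ (r - 1) - α ≤ deriv F s) :
    ∀ s : ℝ, 0 ≤ s → F 0 + β / 2 ^ r * s ^ r - α * s ≤ F s := by
  intro s hs0
  rcases eq_or_lt_of_le hs0 with h0 | hs
  · rw [← h0, Real.zero_rpow (by linarith : r ≠ 0)]
    simp
  set h := s / 2 with hh
  have hh0 : 0 < h := by positivity
  have hhs : h < s := by rw [hh]; linarith
  obtain ⟨c₁, hc₁, e₁⟩ := F_slope hF1 hF2 le_rfl hh0
  obtain ⟨c₂, hc₂, e₂⟩ := F_slope hF1 hF2 hh0.le hhs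
  have m := (derivF_strictMono hF2 hF'').monotoneOn
  have d₁ : -α ≤ deriv F c₁ := by
    have := hFlow c₁ hc₁.1
    have h2 : 0 ≤ β * c₁ ^ (r - 1) :=
      mul_nonneg hβ.le (Real.rpow_nonneg hc₁.1.le _)
    linarith
  have d₂ : β * h ^ (r - 1) - α ≤ deriv F c₂ := by
    refine le_trans (hFlow h hh0) (m (mem_Ioi.2 hh0) (mem_Ioi.2 (lt_trans hh0 hc₂.1)) hc₂.1.le)
  have hrw : h ^ (r - 1) * h = h ^ r := by
    rw [← Real.rpow_add_one hh0.ne' (r - 1)]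
    ring_nf
  have hdiv : h ^ r = s ^ r / 2 ^ r := by
    rw [hh, Real.div_rpow hs0 (by norm_num)]
  have hsh : s - h = h := by rw [hh]; ring
  have A : -α * h ≤ deriv F c₁ * h := mul_le_mul_of_nonneg_right d₁ hh0.le
  have B : (β * h ^ (r - 1) - α) * h ≤ deriv F c₂ * h := mul_le_mul_of_nonneg_right d₂ hh0.le
  have hb : β * (h ^ (r - 1) * h) = β / 2 ^ r * s ^ r := by
    rw [hrw, hdiv]; ring
  rw [hsh] at e₂
  have e₁' : F h - F 0 = deriv F c₁ * h := by rw [e₁]; ring_nf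
  nlinarith [A, B, e₁', e₂, hb]

end Aux2

section Aux3

lemma young_aux {α r δ : ℝ} (hα : 0 ≤ α) (hr : 1 < r) (hδ : 0 < δ) :
    ∃ K : ℝ, 0 ≤ K ∧ ∀ s : ℝ, 0 ≤ s → α * s ≤ δ / 2 * s ^ r + K := by
  set T := (2 * α / δ) ^ (1 / (r - 1)) with hT
  have hT0 : 0 ≤ T := Real.rpow_nonneg (by positivity) _
  refine ⟨α * (T + 1), by positivity, fun s hs => ?_⟩
  rcases le_or_gt s (T + 1) with hsT | hsT
  · have h1 : α * s ≤ α * (T + 1) := mul_le_mul_of_nonneg_left hsT hα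
    have h2 : 0 ≤ δ / 2 * s ^ r := by positivity
    linarith
  · have hs1 : 1 < s := by linarith
    have hTr : T ^ (r - 1) = 2 * α / δ := by
      rw [hT, ← Real.rpow_mul (by positivity), one_div,
        inv_mul_cancel₀ (by linarith : r - 1 ≠ 0), Real.rpow_one]
    have hmono : T ^ (r - 1) ≤ s ^ (r - 1) :=
      Real.rpow_le_rpow hT0 (by linarith) (by linarith)
    rw [hTr] at hmono
    have hα' : α ≤ δ / 2 * s ^ (r - 1) := by
      have := mul_le_mul_of_nonneg_left hmono (by positivity : (0:ℝ) ≤ δ / 2)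
      have h2 : δ / 2 * (2 * α / δ) = α := by field_simp
      linarith
    have hss : s ^ (r - 1) * s = s ^ r := by
      rw [← Real.rpow_add_one (by positivity : s ≠ 0)]
      ring_nf
    have h3 : α * s ≤ δ / 2 * (s ^ (r - 1) * s) := by nlinarith
    have h4 : 0 ≤ α * (T + 1) := by positivity
    rw [hss] at h3
    linarith

lemma le_one_add_rpow {r : ℝ} (hr : 1 < r) : ∀ s : ℝ, 0 ≤ s → s ≤ 1 + s ^ r := by
  intro s hs
  rcases le_or_gt s 1 with h | h
  · have : 0 ≤ s ^ r := Real.rpow_nonneg hs r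
    linarith
  · have h2 : s ^ (1:ℝ) ≤ s ^ r := Real.rpow_le_rpow_of_exponent_le h.le hr.le
    rw [Real.rpow_one] at h2
    linarith

lemma sqrt_diff_sq_le {a b : ℝ} (ha : 0 ≤ a) (hb : 0 ≤ b) :
    (Real.sqrt a - Real.sqrt b) ^ 2 ≤ 2 * a + 2 * b := by
  nlinarith [Real.sq_sqrt ha, Real.sq_sqrt hb,
    mul_nonneg (Real.sqrt_nonneg a) (Real.sqrt_nonneg b)]

end Aux3


def FRAdm (d : ℕ) (Ω : Set (Fin d → ℝ)) (F : ℝ → ℝ) (v : (Fin d → ℝ) → ℝ) : Prop :=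
  Measurable v ∧ (∀ x, 0 ≤ v x) ∧ MeasureTheory.IntegrableOn (fun x => F (v x)) Ω

noncomputable def FRJKO (d : ℕ) (Ω : Set (Fin d → ℝ)) (F : ℝ → ℝ) (τ : ℝ)
    (u v : (Fin d → ℝ) → ℝ) : ℝ :=
  (∫ x in Ω, F (v x)) + (2 / τ) * ∫ x in Ω, (Real.sqrt (v x) - Real.sqrt (u x)) ^ 2

set_option maxHeartbeats 1000000 in
/-- the Fisher–Rao JKO step preserves the support: the sets `{u > 0}` and
`{v̂ > 0}` coincide up to Lebesgue-null sets. -/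
theorem stmt10 (d : ℕ) (Ω : Set (Fin d → ℝ)) (hΩo : IsOpen Ω) (hΩb : Bornology.IsBounded Ω)
    (F : ℝ → ℝ) (α β r : ℝ) (hα : 0 ≤ α) (hβ : 0 < β) (hr : 1 < r)
    (hF1 : ContDiffOn ℝ 1 F (Set.Ici 0)) (hF2 : ContDiffOn ℝ 2 F (Set.Ioi 0))
    (hF'' : ∀ s : ℝ, 0 < s → 0 < deriv (deriv F) s)
    (hFlow : ∀ s : ℝ, 0 < s → β * s ^ (r - 1) - α ≤ deriv F s)
    (hA3 : ∀ M : ℝ, 0 < M → ∀ w : (Fin d → ℝ) → ℝ, (∀ x, 0 ≤ w x) →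
      IntegrableOn w Ω → IntegrableOn (fun x => F (w x)) Ω →
      IntegrableOn (fun x => deriv F (M * w x) * w x) Ω)
    (τ : ℝ) (hτ : 0 < τ) (hατ : α * τ < 2)
    (u : (Fin d → ℝ) → ℝ) (hu0 : ∀ x, 0 ≤ u x) (hum : Measurable u)
    (huI : IntegrableOn u Ω) (huF : IntegrableOn (fun x => F (u x)) Ω)
    (vhat : (Fin d → ℝ) → ℝ) (hvA : FRAdm d Ω F vhat)
    (hvmin : ∀ w, FRAdm d Ω F w → FRJKO d Ω F τ u vhat ≤ FRJKO d Ω F τ u w) :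
    (∀ᵐ x ∂(volume.restrict Ω), u x = 0 → vhat x = 0) ∧
    (∀ᵐ x ∂(volume.restrict Ω), vhat x = 0 → u x = 0) := by
  classical
  obtain ⟨hvm, hv0, hvF⟩ := hvA
  have hΩm : MeasurableSet Ω := hΩo.measurableSet
  have hμΩ : volume Ω < ⊤ := hΩb.measure_lt_top
  have hconst : ∀ c : ℝ, IntegrableOn (fun _ => c) Ω := fun c =>
    integrableOn_const hμΩ.ne
  -- continuous extension of F to handle measurability of compositions
  set Ft : ℝ → ℝ := fun t => F (max t 0) with hFt
  have hFtc : Continuous Ft :=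
    hF1.continuousOn.comp_continuous (continuous_id.max continuous_const)
      (fun x => mem_Ici.2 (le_max_right _ _))
  have hFteq : ∀ g : (Fin d → ℝ) → ℝ, (∀ x, 0 ≤ g x) →
      (fun x => F (g x)) = fun x => Ft (g x) := fun g hg =>
    funext fun x => by rw [hFt]; simp [max_eq_left (hg x)]
  set δ := β / 2 ^ r with hδ
  have hδ0 : 0 < δ := div_pos hβ (Real.rpow_pos_of_pos two_pos r)
  obtain ⟨K, hK0, hKb⟩ := young_aux hα hr hδ0
  have hlow := F_lower hα hβ hr hF1 hF2 hF'' hFlow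
  have hup := F_upper hF1 hF2 hF''
  have hmono := (derivF_strictMono hF2 hF'').monotoneOn
  have hcomb : ∀ s : ℝ, 0 ≤ s → δ / 2 * s ^ r ≤ F s - F 0 + K := by
    intro s hs
    have h1 := hlow s hs
    have h2 := hKb s hs
    linarith
  -- vhat ^ r and vhat are integrable
  have hvr : IntegrableOn (fun x => vhat x ^ r) Ω := by
    apply Integrable.mono' (((hvF.sub (hconst (F 0))).add (hconst K)).const_mul (2 / δ))
      (((Real.continuous_rpow_const (by linarith : (0:ℝ) ≤ r)).measurable.comp
        hvm).aestronglyMeasurable)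
    refine ae_of_all _ fun x => ?_
    have h1 := hcomb (vhat x) (hv0 x)
    have h2 : 0 ≤ vhat x ^ r := Real.rpow_nonneg (hv0 x) r
    simp only [Pi.add_apply, Pi.sub_apply, Function.comp_apply, Real.norm_eq_abs]
    rw [abs_of_nonneg h2]
    have h3 : δ / 2 * vhat x ^ r ≤ F (vhat x) - F 0 + K := h1
    calc vhat x ^ r = (2 / δ) * (δ / 2 * vhat x ^ r) := by field_simp
      _ ≤ (2 / δ) * (F (vhat x) - F 0 + K) := by
          apply mul_le_mul_of_nonneg_left h3 (by positivity)
  have hvI : IntegrableOn vhat Ω := by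
    apply Integrable.mono' ((hconst 1).add hvr) hvm.aestronglyMeasurable
    refine ae_of_all _ fun x => ?_
    simp only [Pi.add_apply, Real.norm_eq_abs]
    rw [abs_of_nonneg (hv0 x)]
    exact le_one_add_rpow hr _ (hv0 x)
  -- FR integrands are integrable
  have hFR : ∀ g : (Fin d → ℝ) → ℝ, Measurable g → (∀ x, 0 ≤ g x) → IntegrableOn g Ω →
      IntegrableOn (fun x => (Real.sqrt (g x) - Real.sqrt (u x)) ^ 2) Ω := by
    intro g hgm hg0 hgI
    apply Integrable.mono' ((hgI.const_mul 2).add (huI.const_mul 2))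
      ((((Real.continuous_sqrt.measurable.comp hgm).sub
        (Real.continuous_sqrt.measurable.comp hum)).pow_const 2).aestronglyMeasurable)
    refine ae_of_all _ fun x => ?_
    simp only [Pi.add_apply, Function.comp_apply, Real.norm_eq_abs]
    rw [abs_of_nonneg (sq_nonneg _)]
    exact sqrt_diff_sq_le (hg0 x) (hu0 x)
  -- minimality translated into a single integral inequality
  have hGdiff : ∀ w : (Fin d → ℝ) → ℝ, Measurable w → (∀ x, 0 ≤ w x) →
      IntegrableOn (fun x => F (w x)) Ω → IntegrableOn w Ω →
      0 ≤ ∫ x in Ω, (F (w x) - F (vhat x) +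
        (2 / τ) * ((Real.sqrt (w x) - Real.sqrt (u x)) ^ 2 -
          (Real.sqrt (vhat x) - Real.sqrt (u x)) ^ 2)) := by
    intro w hwm hw0 hwF hwI
    have hmin := hvmin w ⟨hwm, hw0, hwF⟩
    unfold FRJKO at hmin
    have i1 := hvF
    have i2 := hwF
    have i3 := hFR vhat hvm hv0 hvI
    have i4 := hFR w hwm hw0 hwI
    have h1 : Integrable (fun x => F (w x) - F (vhat x)) (volume.restrict Ω) := i2.sub i1
    have h2 : Integrable (fun x => (2 / τ) * ((Real.sqrt (w x) - Real.sqrt (u x)) ^ 2 -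
        (Real.sqrt (vhat x) - Real.sqrt (u x)) ^ 2)) (volume.restrict Ω) :=
      (i4.sub i3).const_mul _
    have e : ∫ x in Ω, (F (w x) - F (vhat x) +
          (2 / τ) * ((Real.sqrt (w x) - Real.sqrt (u x)) ^ 2 -
            (Real.sqrt (vhat x) - Real.sqrt (u x)) ^ 2))
        = (∫ x in Ω, (F (w x) - F (vhat x))) +
          ∫ x in Ω, (2 / τ) * ((Real.sqrt (w x) - Real.sqrt (u x)) ^ 2 -
            (Real.sqrt (vhat x) - Real.sqrt (u x)) ^ 2) := integral_add h1 h2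
    have e2 : ∫ x in Ω, (F (w x) - F (vhat x))
        = (∫ x in Ω, F (w x)) - ∫ x in Ω, F (vhat x) := integral_sub i2 i1
    have e3 : ∫ x in Ω, ((Real.sqrt (w x) - Real.sqrt (u x)) ^ 2 -
          (Real.sqrt (vhat x) - Real.sqrt (u x)) ^ 2)
        = (∫ x in Ω, (Real.sqrt (w x) - Real.sqrt (u x)) ^ 2) -
          ∫ x in Ω, (Real.sqrt (vhat x) - Real.sqrt (u x)) ^ 2 := integral_sub i4 i3
    rw [e, integral_const_mul, e2, e3]
    linarith
  -- splitting off the part of Ω where the integrand vanishes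
  have hsplit : ∀ (t : Set (Fin d → ℝ)), MeasurableSet t → ∀ g : (Fin d → ℝ) → ℝ,
      IntegrableOn g Ω → (∀ x ∈ Ω \ t, g x = 0) →
      ∫ x in Ω, g x = ∫ x in Ω ∩ t, g x := by
    intro t ht g hg hz
    rw [← integral_inter_add_diff ht hg, setIntegral_eq_zero_of_forall_eq_zero hz, add_zero]
  have hαcompletion : α - 2 / τ < 0 := by
    rw [sub_neg, lt_div_iff₀ hτ]
    linarith
  constructor
  -- PART 1 : vhat = 0 a.e. on {u = 0}
  · set t := {x : Fin d → ℝ | u x = 0} with ht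
    have htm : MeasurableSet t := hum (measurableSet_singleton 0)
    set w : (Fin d → ℝ) → ℝ := fun x => if u x = 0 then 0 else vhat x with hw
    have hwm : Measurable w := Measurable.ite htm measurable_const hvm
    have hw0 : ∀ x, 0 ≤ w x := fun x => by
      rw [hw]; dsimp only; split
      · exact le_rfl
      · exact hv0 x
    have hwle : ∀ x, w x ≤ vhat x := fun x => by
      rw [hw]; dsimp only; split
      · exact hv0 x
      · exact le_rfl
    have hwI : IntegrableOn w Ω := by
      apply Integrable.mono' hvI hwm.aestronglyMeasurable
      exact ae_of_all _ fun x => by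
        rw [Real.norm_eq_abs, abs_of_nonneg (hw0 x)]; exact hwle x
    have hwFm : Measurable fun x => F (w x) := by
      rw [hFteq w hw0]; exact hFtc.measurable.comp hwm
    have hwF : IntegrableOn (fun x => F (w x)) Ω := by
      apply Integrable.mono' ((hconst |F 0|).add hvF.abs) hwFm.aestronglyMeasurable
      refine ae_of_all _ fun x => ?_
      simp only [Pi.add_apply, Real.norm_eq_abs]
      rw [hw]; dsimp only
      split
      · linarith [abs_nonneg (F (vhat x)), le_refl |F 0|]
      · linarith [abs_nonneg (F 0), le_refl |F (vhat x)|]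
    have h0 := hGdiff w hwm hw0 hwF hwI
    have hgI : IntegrableOn (fun x => F (w x) - F (vhat x) +
        (2 / τ) * ((Real.sqrt (w x) - Real.sqrt (u x)) ^ 2 -
          (Real.sqrt (vhat x) - Real.sqrt (u x)) ^ 2)) Ω :=
      (hwF.sub hvF).add (((hFR w hwm hw0 hwI).sub (hFR vhat hvm hv0 hvI)).const_mul _)
    have hgz : ∀ x ∈ Ω \ t, (F (w x) - F (vhat x) +
        (2 / τ) * ((Real.sqrt (w x) - Real.sqrt (u x)) ^ 2 -
          (Real.sqrt (vhat x) - Real.sqrt (u x)) ^ 2)) = 0 := by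
      intro x hx
      have hne : ¬ (u x = 0) := hx.2
      rw [hw]; dsimp only; rw [if_neg hne]; ring
    have h1 : (0:ℝ) ≤ ∫ x in Ω ∩ t, (F (w x) - F (vhat x) +
        (2 / τ) * ((Real.sqrt (w x) - Real.sqrt (u x)) ^ 2 -
          (Real.sqrt (vhat x) - Real.sqrt (u x)) ^ 2)) := by
      rw [← hsplit t htm _ hgI hgz]; exact h0
    have hpt : ∀ x ∈ Ω ∩ t, (F (w x) - F (vhat x) +
        (2 / τ) * ((Real.sqrt (w x) - Real.sqrt (u x)) ^ 2 -
          (Real.sqrt (vhat x) - Real.sqrt (u x)) ^ 2)) ≤ (α - 2 / τ) * vhat x := by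
      intro x hx
      have hu : u x = 0 := hx.2
      rw [hw]; dsimp only; rw [if_pos hu, hu]
      have h3 : Real.sqrt (vhat x) ^ 2 = vhat x := Real.sq_sqrt (hv0 x)
      have h4 := hlow (vhat x) (hv0 x)
      have h5 : 0 ≤ β / 2 ^ r * vhat x ^ r := by
        have := Real.rpow_nonneg (hv0 x) r
        positivity
      simp only [Real.sqrt_zero, sub_zero, sub_self]
      rw [zero_pow (by norm_num), h3]
      have h6 : 2 / τ * (0 - vhat x) = -(2 / τ) * vhat x := by ring
      nlinarith [hv0 x]
    have h2 : ∫ x in Ω ∩ t, (F (w x) - F (vhat x) +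
          (2 / τ) * ((Real.sqrt (w x) - Real.sqrt (u x)) ^ 2 -
            (Real.sqrt (vhat x) - Real.sqrt (u x)) ^ 2))
        ≤ ∫ x in Ω ∩ t, (α - 2 / τ) * vhat x :=
      setIntegral_mono_on (IntegrableOn.mono_set hgI inter_subset_left)
        (IntegrableOn.mono_set (hvI.const_mul _) inter_subset_left) (hΩm.inter htm) hpt
    have h3 : ∫ x in Ω ∩ t, vhat x ≤ 0 := by
      have hc := h1.trans h2
      rw [integral_const_mul] at hc
      nlinarith [hc, hαcompletion]
    have h4 : ∫ x in Ω ∩ t, vhat x = 0 :=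
      le_antisymm h3 (setIntegral_nonneg (hΩm.inter htm) fun x _ => hv0 x)
    have h5 : vhat =ᵐ[volume.restrict (Ω ∩ t)] 0 :=
      (setIntegral_eq_zero_iff_of_nonneg_ae (ae_of_all _ hv0)
        (IntegrableOn.mono_set hvI inter_subset_left)).1 h4
    have h6 : (volume.restrict Ω).restrict t = volume.restrict (Ω ∩ t) := by
      rw [Measure.restrict_restrict htm, inter_comm]
    have h7 : ∀ᵐ x ∂((volume.restrict Ω).restrict t), vhat x = 0 := by
      rw [h6]; exact h5
    have h8 := (ae_restrict_iff' htm).1 h7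
    filter_upwards [h8] with x hx hu
    exact hx hu
  -- PART 2 : u = 0 a.e. on {vhat = 0}
  · set t2 := {x : Fin d → ℝ | vhat x = 0 ∧ 0 < u x} with ht2
    have ht2m : MeasurableSet t2 := (hvm (measurableSet_singleton 0)).inter
      (measurableSet_lt measurable_const hum)
    set A := Ω ∩ t2 with hA
    have hAm : MeasurableSet A := hΩm.inter ht2m
    have hAsub : A ⊆ Ω := inter_subset_left
    have hA0 : volume A = 0 := by
      by_contra hA0
      have huA : IntegrableOn u A := IntegrableOn.mono_set huI hAsub
      set c := ∫ x in A, u x with hc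
      have hc0 : 0 < c := by
        rw [hc, setIntegral_pos_iff_support_of_nonneg_ae (ae_of_all _ hu0) huA]
        have hsub : A ⊆ Function.support u ∩ A := fun x hx => ⟨ne_of_gt hx.2.2, hx⟩
        have hpos : 0 < volume A := lt_of_le_of_ne zero_le (Ne.symm hA0)
        exact lt_of_lt_of_le hpos (measure_mono hsub)
      have hDFu0 : IntegrableOn (fun x => deriv F (u x) * u x) Ω := by
        have := hA3 1 one_pos u hu0 huI huF
        simpa using this
      have hMu : IntegrableOn (fun x => max (deriv F (u x)) 0 * u x) Ω := by
        have heq : (fun x => max (deriv F (u x)) 0 * u x)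
            = fun x => max (deriv F (u x) * u x) 0 := by
          funext x
          rcases eq_or_lt_of_le (hu0 x) with h | h
          · rw [← h]; simp
          · rw [max_mul_of_nonneg _ _ (hu0 x), zero_mul]
        rw [heq]
        exact Integrable.pos_part hDFu0
      set C := ∫ x in A, max (deriv F (u x)) 0 * u x with hC
      have hC0 : 0 ≤ C := setIntegral_nonneg hAm fun x _ =>
        mul_nonneg (le_max_right _ _) (hu0 x)
      set D := C + 2 / τ * c with hD
      have hD0 : 0 < D := by
        have h2c : 0 < 2 / τ * c := mul_pos (by positivity) hc0
        rw [hD]; linarith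
      set ε := min 1 ((2 * c / (τ * D)) ^ (2:ℕ)) with hε
      have hε0 : 0 < ε := lt_min one_pos
        (pow_pos (div_pos (by linarith) (mul_pos hτ hD0)) 2)
      have hε1 : ε ≤ 1 := min_le_left _ _
      have hsε : Real.sqrt ε ≤ 2 * c / (τ * D) := by
        calc Real.sqrt ε ≤ Real.sqrt ((2 * c / (τ * D)) ^ (2:ℕ)) :=
              Real.sqrt_le_sqrt (min_le_right _ _)
          _ = 2 * c / (τ * D) := Real.sqrt_sq
              (div_nonneg (by linarith) (mul_pos hτ hD0).le)
      have hsε0 : 0 < Real.sqrt ε := Real.sqrt_pos.2 hε0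
      have hsεsq : Real.sqrt ε ^ 2 = ε := Real.sq_sqrt hε0.le
      clear_value c C D ε
      -- competitor
      set w : (Fin d → ℝ) → ℝ := fun x => if x ∈ A then ε * u x else vhat x with hw
      have hwm : Measurable w := Measurable.ite hAm (measurable_const.mul hum) hvm
      have hw0 : ∀ x, 0 ≤ w x := fun x => by
        rw [hw]; dsimp only; split
        · exact mul_nonneg hε0.le (hu0 x)
        · exact hv0 x
      have hFub : ∀ x ∈ A, F (ε * u x) - F 0 ≤ ε * (max (deriv F (u x)) 0 * u x) := by
        intro x hx
        have hux : 0 < u x := hx.2.2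
        have hεu : 0 < ε * u x := mul_pos hε0 hux
        have h1 := hup (ε * u x) hεu
        have h2 : deriv F (ε * u x) ≤ deriv F (u x) :=
          hmono (mem_Ioi.2 hεu) (mem_Ioi.2 hux) (mul_le_of_le_one_left hux.le hε1)
        have h3 : deriv F (ε * u x) * (ε * u x) ≤ max (deriv F (u x)) 0 * (ε * u x) :=
          mul_le_mul_of_nonneg_right (le_trans h2 (le_max_left _ _)) hεu.le
        nlinarith [h1, h3]
      have hFlb : ∀ x ∈ A, F 0 - α * u x ≤ F (ε * u x) := by
        intro x hx
        have h0' : 0 ≤ ε * u x := mul_nonneg hε0.le (hu0 x)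
        have h1 := hlow (ε * u x) h0'
        have h2 : 0 ≤ β / 2 ^ r * (ε * u x) ^ r := by
          have := Real.rpow_nonneg h0' r
          positivity
        have h3 : α * (ε * u x) ≤ α * u x :=
          mul_le_mul_of_nonneg_left (mul_le_of_le_one_left (hu0 x) hε1) hα
        linarith
      have hwFm : Measurable fun x => F (w x) := by
        rw [hFteq w hw0]; exact hFtc.measurable.comp hwm
      have hwF : IntegrableOn (fun x => F (w x)) Ω := by
        apply Integrable.mono'
          (((hvF.abs.add (hconst |F 0|)).add (huI.const_mul α)).add hMu)
          hwFm.aestronglyMeasurable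
        refine ae_of_all _ fun x => ?_
        simp only [Pi.add_apply, Real.norm_eq_abs]
        have hMx : 0 ≤ max (deriv F (u x)) 0 * u x :=
          mul_nonneg (le_max_right _ _) (hu0 x)
        have hux : 0 ≤ α * u x := mul_nonneg hα (hu0 x)
        rw [hw]; dsimp only
        split
        case isTrue hxA =>
          have h1 := hFub x hxA
          have h2 := hFlb x hxA
          have h3 : ε * (max (deriv F (u x)) 0 * u x) ≤ max (deriv F (u x)) 0 * u x := by
            nlinarith [hMx, hε1, hε0.le]
          have h4 := abs_nonneg (F (vhat x))
          rw [abs_le]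
          constructor
          · nlinarith [neg_abs_le (F 0)]
          · nlinarith [le_abs_self (F 0)]
        case isFalse hxA =>
          have h5 := abs_nonneg (F 0)
          linarith [le_abs_self (F (vhat x)), neg_abs_le (F (vhat x)),
            le_refl |F (vhat x)|]
      have hwI : IntegrableOn w Ω := by
        apply Integrable.mono' (hvI.add huI) hwm.aestronglyMeasurable
        refine ae_of_all _ fun x => ?_
        simp only [Pi.add_apply, Real.norm_eq_abs]
        rw [hw]; dsimp only
        split
        case isTrue hxA =>
          rw [abs_of_nonneg (mul_nonneg hε0.le (hu0 x))]
          have := mul_le_of_le_one_left (hu0 x) hε1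
          linarith [hv0 x]
        case isFalse hxA =>
          rw [abs_of_nonneg (hv0 x)]
          linarith [hu0 x]
      have h0 := hGdiff w hwm hw0 hwF hwI
      have hgI : IntegrableOn (fun x => F (w x) - F (vhat x) +
          (2 / τ) * ((Real.sqrt (w x) - Real.sqrt (u x)) ^ 2 -
            (Real.sqrt (vhat x) - Real.sqrt (u x)) ^ 2)) Ω :=
        (hwF.sub hvF).add (((hFR w hwm hw0 hwI).sub (hFR vhat hvm hv0 hvI)).const_mul _)
      have hgz : ∀ x ∈ Ω \ t2, (F (w x) - F (vhat x) +
          (2 / τ) * ((Real.sqrt (w x) - Real.sqrt (u x)) ^ 2 -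
            (Real.sqrt (vhat x) - Real.sqrt (u x)) ^ 2)) = 0 := by
        intro x hx
        have hnA : x ∉ A := fun h => hx.2 h.2
        rw [hw]; dsimp only; rw [if_neg hnA]; ring
      have h1 : (0:ℝ) ≤ ∫ x in A, (F (w x) - F (vhat x) +
          (2 / τ) * ((Real.sqrt (w x) - Real.sqrt (u x)) ^ 2 -
            (Real.sqrt (vhat x) - Real.sqrt (u x)) ^ 2)) := by
        rw [hA, ← hsplit t2 ht2m _ hgI hgz]
        exact h0
      have hpt : ∀ x ∈ A, (F (w x) - F (vhat x) +
          (2 / τ) * ((Real.sqrt (w x) - Real.sqrt (u x)) ^ 2 -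
            (Real.sqrt (vhat x) - Real.sqrt (u x)) ^ 2))
          ≤ ε * (max (deriv F (u x)) 0 * u x)
            + 2 / τ * (ε - 2 * Real.sqrt ε) * u x := by
        intro x hx
        have hv : vhat x = 0 := hx.2.1
        have hux : 0 < u x := hx.2.2
        rw [hw]; dsimp only; rw [if_pos hx, hv]
        have hsu : Real.sqrt (u x) ^ 2 = u x := Real.sq_sqrt hux.le
        have hsm : Real.sqrt (ε * u x) = Real.sqrt ε * Real.sqrt (u x) :=
          Real.sqrt_mul hε0.le _
        have hexp : (Real.sqrt (ε * u x) - Real.sqrt (u x)) ^ 2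
            = ε * u x - 2 * Real.sqrt ε * u x + u x := by
          rw [hsm]
          have hh : (Real.sqrt ε * Real.sqrt (u x) - Real.sqrt (u x)) ^ 2
              = Real.sqrt ε ^ 2 * Real.sqrt (u x) ^ 2
                - 2 * Real.sqrt ε * Real.sqrt (u x) ^ 2 + Real.sqrt (u x) ^ 2 := by ring
          rw [hh, hsεsq, hsu]
        have hv2 : (Real.sqrt 0 - Real.sqrt (u x)) ^ 2 = u x := by
          rw [Real.sqrt_zero, zero_sub, neg_sq, hsu]
        rw [hexp, hv2]
        have hub := hFub x hx
        have heq : (2 / τ) * ((ε * u x - 2 * Real.sqrt ε * u x + u x) - u x)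
            = 2 / τ * (ε - 2 * Real.sqrt ε) * u x := by ring
        linarith [heq, hub]
      have hbI1 : IntegrableOn (fun x => ε * (max (deriv F (u x)) 0 * u x)) A :=
        (IntegrableOn.mono_set hMu hAsub).const_mul ε
      have hbI2 : IntegrableOn (fun x => 2 / τ * (ε - 2 * Real.sqrt ε) * u x) A :=
        huA.const_mul _
      have h2 : ∫ x in A, (F (w x) - F (vhat x) +
            (2 / τ) * ((Real.sqrt (w x) - Real.sqrt (u x)) ^ 2 -
              (Real.sqrt (vhat x) - Real.sqrt (u x)) ^ 2))
          ≤ ∫ x in A, (ε * (max (deriv F (u x)) 0 * u x)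
            + 2 / τ * (ε - 2 * Real.sqrt ε) * u x) :=
        setIntegral_mono_on (IntegrableOn.mono_set hgI hAsub) (hbI1.add hbI2) hAm hpt
      have h3 : ∫ x in A, (ε * (max (deriv F (u x)) 0 * u x)
            + 2 / τ * (ε - 2 * Real.sqrt ε) * u x)
          = ε * C + 2 / τ * (ε - 2 * Real.sqrt ε) * c := by
        rw [integral_add hbI1 hbI2, integral_const_mul, integral_const_mul, ← hC, ← hc]
      have hfinal : (0:ℝ) ≤ ε * C + 2 / τ * (ε - 2 * Real.sqrt ε) * c := by
        rw [← h3]; exact h1.trans h2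
      have k1 : Real.sqrt ε * D ≤ 2 * c / τ := by
        calc Real.sqrt ε * D ≤ (2 * c / (τ * D)) * D :=
              mul_le_mul_of_nonneg_right hsε hD0.le
          _ = 2 * c / τ := by field_simp
      have k2 : ε * D ≤ Real.sqrt ε * (2 * c / τ) := by
        calc ε * D = Real.sqrt ε * (Real.sqrt ε * D) := by
              rw [← mul_assoc, ← pow_two, hsεsq]
          _ ≤ Real.sqrt ε * (2 * c / τ) := mul_le_mul_of_nonneg_left k1 hsε0.le
      have k3 : 0 < 2 / τ * (Real.sqrt ε * c) :=
        mul_pos (div_pos two_pos hτ) (mul_pos hsε0 hc0)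
      have k4 : ε * C + 2 / τ * (ε - 2 * Real.sqrt ε) * c
          = ε * D - 2 / τ * 2 * (Real.sqrt ε * c) := by rw [hD]; ring
      have k5 : Real.sqrt ε * (2 * c / τ) = 2 / τ * (Real.sqrt ε * c) := by ring
      linarith [hfinal, k2, k3, k4, k5]

    -- conclude from hA0
    rw [ae_restrict_iff' hΩm, ae_iff]
    refine measure_mono_null ?_ hA0
    intro x hx
    simp only [mem_setOf_eq, not_forall] at hx
    push_neg at hx
    exact ⟨hx.1, hx.2.1, lt_of_le_of_ne (hu0 x) (Ne.symm hx.2.2)⟩
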